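/- Let 0 → A → V → B → 0 be a short exact sequence of tame persistence modules over Z_2 where every interval in the barcode of B is finite. Let E_0 be a barcode basis of A and E_1 = {β_i ∼ [a_i, b_i)} a barcode basis of B. Define B·E^2 as the direct sum of interval modules [a_i, ∞) and D·E^2 as the direct sum of interval modules [b_i, ∞), and let ext: D·E^2 → A ⊕ B·E^2 be the persistence morphism whose associated matrix is the block matrix (EXT; Id), where the i-th column of EXT gives the coordinates in E_0 of the image in A at parameter b_i of a lift of β_i. Then V is isomorphic to the quotient (A ⊕ B·E^2)/ext(D·E^2). -/
import Mathlib


noncomputable section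

/-- A persistence module over `ℤ/2`. -/
structure PersMod where
  V : ℝ → Type
  [grp : ∀ t, AddCommGroup (V t)]
  [mod : ∀ t, Module (ZMod 2) (V t)]
  ρ : ∀ s t : ℝ, s ≤ t → V s →ₗ[ZMod 2] V t
  ρ_id : ∀ (t : ℝ) (h : t ≤ t) (x : V t), ρ t t h x = x
  ρ_comp : ∀ (r s t : ℝ) (h1 : r ≤ s) (h2 : s ≤ t) (x : V r),
    ρ s t h2 (ρ r s h1 x) = ρ r t (h1.trans h2) x

attribute [instance] PersMod.grp PersMod.mod

/-- A persistence morphism: a family of linear maps commuting with the structure maps. -/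
structure PersHom (M N : PersMod) where
  map : ∀ t : ℝ, M.V t →ₗ[ZMod 2] N.V t
  comm : ∀ (s t : ℝ) (h : s ≤ t) (x : M.V s), map t (M.ρ s t h x) = N.ρ s t h (map s x)

/-- A barcode basis of the persistence module `M` with intervals `[a i, b i)`, `i : Fin N`:
for each generator a compatible family of vectors living on its interval and dying past it,
whose alive members form a basis of `M.V t` at every `t`. -/
structure BarcodeBasis (M : PersMod) (N : ℕ) (a b : Fin N → ℝ) where
  vec : ∀ (i : Fin N) (t : ℝ), a i ≤ t → t < b i → M.V t
  compat : ∀ (i : Fin N) (s t : ℝ) (hs : a i ≤ s) (h : s ≤ t) (ht : t < b i),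
    M.ρ s t h (vec i s hs (lt_of_le_of_lt h ht)) = vec i t (hs.trans h) ht
  dies : ∀ (i : Fin N) (s : ℝ) (hs : a i ≤ s) (hs' : s < b i) (t : ℝ) (h : s ≤ t),
    b i ≤ t → M.ρ s t h (vec i s hs hs') = 0
  indep : ∀ t : ℝ, LinearIndependent (ZMod 2)
    (fun i : {i : Fin N // a i ≤ t ∧ t < b i} => vec i.1 t i.2.1 i.2.2)
  spans : ∀ t : ℝ, Submodule.span (ZMod 2)
    (Set.range (fun i : {i : Fin N // a i ≤ t ∧ t < b i} => vec i.1 t i.2.1 i.2.2)) = ⊤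

/-- The underlying graded vector space of `A ⊕ B·E²` at parameter `t`: the direct sum of
`A_t` with the interval modules `ℤ/2[a1 i, ∞)` generated by the births of the barcode of
`B`. -/
abbrev ExtTarget (Aa : PersMod) (N1 : ℕ) (a1 : Fin N1 → ℝ) (t : ℝ) : Type :=
  Aa.V t × ({i : Fin N1 // a1 i ≤ t} → ZMod 2)

/-- The element of `A_t` with coordinates `col` in the barcode basis `E0` (sum over the
generators alive at `t`). -/
noncomputable def extVec (Aa : PersMod) (N0 : ℕ) (a0 b0 : Fin N0 → ℝ)
    (E0 : BarcodeBasis Aa N0 a0 b0) (col : Fin N0 → ZMod 2) (t : ℝ) : Aa.V t :=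
  ∑ j : Fin N0, if h : a0 j ≤ t ∧ t < b0 j then col j • E0.vec j t h.1 h.2 else 0

/-- The generator of the relation submodule `ext(D·E²)` corresponding to the `i`-th
barcode generator of `B`, alive from its death value `b1 i` on: its `A`-component is given
by the `i`-th column of the extension matrix `EXT` (pushed forward from parameter `b1 i`),
and its `B·E²`-component is the `i`-th canonical basis vector. -/
noncomputable def extGen (Aa : PersMod) (N0 : ℕ) (a0 b0 : Fin N0 → ℝ)
    (E0 : BarcodeBasis Aa N0 a0 b0) (N1 : ℕ) (a1 b1 : Fin N1 → ℝ)
    (EXT : Fin N0 → Fin N1 → ZMod 2) (i : Fin N1) (t : ℝ) (hi : b1 i ≤ t) :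
    ExtTarget Aa N1 a1 t :=
  (Aa.ρ (b1 i) t hi (extVec Aa N0 a0 b0 E0 (fun j => EXT j i) (b1 i)),
   fun k => if k.1 = i then 1 else 0)

/-- The relation submodule `ext(D·E²) ⊆ A ⊕ B·E²` at parameter `t`: spanned by the images
of the generators of `D·E²` already born at `t`. -/
noncomputable def extRel (Aa : PersMod) (N0 : ℕ) (a0 b0 : Fin N0 → ℝ)
    (E0 : BarcodeBasis Aa N0 a0 b0) (N1 : ℕ) (a1 b1 : Fin N1 → ℝ)
    (EXT : Fin N0 → Fin N1 → ZMod 2) (t : ℝ) :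
    Submodule (ZMod 2) (ExtTarget Aa N1 a1 t) :=
  Submodule.span (ZMod 2)
    {x | ∃ (i : Fin N1) (hi : b1 i ≤ t), x = extGen Aa N0 a0 b0 E0 N1 a1 b1 EXT i t hi}

/-- The structure map of `B·E²` from parameter `s` to parameter `t`. -/
noncomputable def resMap (N1 : ℕ) (a1 : Fin N1 → ℝ) (s t : ℝ) :
    ({i : Fin N1 // a1 i ≤ s} → ZMod 2) →ₗ[ZMod 2] ({i : Fin N1 // a1 i ≤ t} → ZMod 2) where
  toFun f k := if h' : a1 k.1 ≤ s then f ⟨k.1, h'⟩ else 0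
  map_add' := by
    intro f g; funext k; by_cases h' : a1 k.1 ≤ s <;> simp [h']
  map_smul' := by
    intro cc f; funext k; by_cases h' : a1 k.1 ≤ s <;> simp [h']

/-- The structure map of `A ⊕ B·E²` from parameter `s` to parameter `t`. -/
noncomputable def extMap (Aa : PersMod) (N1 : ℕ) (a1 : Fin N1 → ℝ) (s t : ℝ) (h : s ≤ t) :
    ExtTarget Aa N1 a1 s →ₗ[ZMod 2] ExtTarget Aa N1 a1 t :=
  (Aa.ρ s t h).prodMap (resMap N1 a1 s t)

/- ===================== auxiliary development ===================== -/

lemma sum_dite_subtype {N : ℕ} {M : Type} [AddCommMonoid M] (p : Fin N → Prop)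
    [DecidablePred p] (g : ∀ i, p i → M) :
    ∑ i : {i : Fin N // p i}, g i.1 i.2 = ∑ i : Fin N, if h : p i then g i h else 0 := by
  rw [← Fintype.sum_subtype_add_sum_subtype p (fun i => if h : p i then g i h else 0)]
  have h1 : ∀ i : {x : Fin N // p x}, (if h : p i.1 then g i.1 h else 0) = g i.1 i.2 := by
    intro i; rw [dif_pos i.2]
  have h2 : ∀ i : {x : Fin N // ¬ p x}, (if h : p i.1 then g i.1 h else 0) = 0 := by
    intro i; rw [dif_neg i.2]
  rw [Finset.sum_congr rfl (fun i _ => h1 i), Finset.sum_congr rfl (fun i _ => h2 i)]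
  simp

lemma zmod2_add_self {M : Type} [AddCommGroup M] [Module (ZMod 2) M] (x : M) :
    x + x = 0 := by
  have h : x + x = (2 : ZMod 2) • x := (two_smul (ZMod 2) x).symm
  have h2 : (2 : ZMod 2) = 0 := by decide
  rw [h, h2, zero_smul]

section Aux

variable (Aa Vv Bb : PersMod) (ii : PersHom Aa Vv)
  (N0 : ℕ) (a0 b0 : Fin N0 → ℝ) (E0 : BarcodeBasis Aa N0 a0 b0)
  (N1 : ℕ) (a1 b1 : Fin N1 → ℝ)
  (lift : ∀ (i : Fin N1) (t : ℝ), a1 i ≤ t → t < b1 i → Vv.V t)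
  (EXT : Fin N0 → Fin N1 → ZMod 2)

noncomputable def liftExt (i : Fin N1) (t : ℝ) (h : a1 i ≤ t) : Vv.V t :=
  if h' : t < b1 i then lift i t h h'
  else Vv.ρ (b1 i) t (le_of_not_gt h')
    (ii.map (b1 i) (extVec Aa N0 a0 b0 E0 (fun j => EXT j i) (b1 i)))

noncomputable def Phi (t : ℝ) : ExtTarget Aa N1 a1 t →ₗ[ZMod 2] Vv.V t where
  toFun x := ii.map t x.1 + ∑ i : Fin N1,
    if h : a1 i ≤ t then x.2 ⟨i, h⟩ • liftExt Aa Vv ii N0 a0 b0 E0 N1 a1 b1 lift EXT i t h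
    else 0
  map_add' x y := by
    have : ∀ i : Fin N1,
        (if h : a1 i ≤ t then (x.2 ⟨i, h⟩ + y.2 ⟨i, h⟩) •
          liftExt Aa Vv ii N0 a0 b0 E0 N1 a1 b1 lift EXT i t h else 0) =
        (if h : a1 i ≤ t then x.2 ⟨i, h⟩ •
          liftExt Aa Vv ii N0 a0 b0 E0 N1 a1 b1 lift EXT i t h else 0) +
        (if h : a1 i ≤ t then y.2 ⟨i, h⟩ •
          liftExt Aa Vv ii N0 a0 b0 E0 N1 a1 b1 lift EXT i t h else 0) := by
      intro i; split_ifs with h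
      · rw [add_smul]
      · simp
    simp only [Prod.fst_add, Prod.snd_add, Pi.add_apply, map_add]
    rw [Finset.sum_congr rfl (fun i _ => this i), Finset.sum_add_distrib]
    abel
  map_smul' c x := by
    have : ∀ i : Fin N1,
        (if h : a1 i ≤ t then (c * x.2 ⟨i, h⟩) •
          liftExt Aa Vv ii N0 a0 b0 E0 N1 a1 b1 lift EXT i t h else 0) =
        c • (if h : a1 i ≤ t then x.2 ⟨i, h⟩ •
          liftExt Aa Vv ii N0 a0 b0 E0 N1 a1 b1 lift EXT i t h else 0) := by
      intro i; split_ifs with h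
      · rw [mul_smul]
      · simp
    simp only [Prod.smul_fst, Prod.smul_snd, Pi.smul_apply, smul_eq_mul, map_smul,
      RingHom.id_apply]
    rw [Finset.sum_congr rfl (fun i _ => this i), ← Finset.smul_sum, smul_add]

end Aux

section Aux2

variable (Aa Vv Bb : PersMod) (ii : PersHom Aa Vv) (pp : PersHom Vv Bb)
  (N0 : ℕ) (a0 b0 : Fin N0 → ℝ) (E0 : BarcodeBasis Aa N0 a0 b0)
  (N1 : ℕ) (a1 b1 : Fin N1 → ℝ) (E1 : BarcodeBasis Bb N1 a1 b1)
  (lift : ∀ (i : Fin N1) (t : ℝ), a1 i ≤ t → t < b1 i → Vv.V t)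
  (EXT : Fin N0 → Fin N1 → ZMod 2)

lemma rho_liftExt
    (hliftcompat : ∀ (i : Fin N1) (s t : ℝ) (hs : a1 i ≤ s) (h : s ≤ t) (ht : t < b1 i),
      Vv.ρ s t h (lift i s hs (lt_of_le_of_lt h ht)) = lift i t (hs.trans h) ht)
    (hEXT : ∀ (i : Fin N1) (s : ℝ) (hs : a1 i ≤ s) (hs' : s < b1 i),
      ii.map (b1 i) (extVec Aa N0 a0 b0 E0 (fun j => EXT j i) (b1 i)) =
        Vv.ρ s (b1 i) (le_of_lt hs') (lift i s hs hs'))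
    (i : Fin N1) (s t : ℝ) (hs : a1 i ≤ s) (h : s ≤ t) :
    Vv.ρ s t h (liftExt Aa Vv ii N0 a0 b0 E0 N1 a1 b1 lift EXT i s hs) =
    liftExt Aa Vv ii N0 a0 b0 E0 N1 a1 b1 lift EXT i t (hs.trans h) := by
  unfold liftExt
  by_cases ht : t < b1 i
  · have hs' : s < b1 i := lt_of_le_of_lt h ht
    rw [dif_pos hs', dif_pos ht]
    exact hliftcompat i s t hs h ht
  · rw [dif_neg ht]
    by_cases hs' : s < b1 i
    · rw [dif_pos hs', hEXT i s hs hs', Vv.ρ_comp]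
    · rw [dif_neg hs', Vv.ρ_comp]

lemma Phi_comm
    (hliftcompat : ∀ (i : Fin N1) (s t : ℝ) (hs : a1 i ≤ s) (h : s ≤ t) (ht : t < b1 i),
      Vv.ρ s t h (lift i s hs (lt_of_le_of_lt h ht)) = lift i t (hs.trans h) ht)
    (hEXT : ∀ (i : Fin N1) (s : ℝ) (hs : a1 i ≤ s) (hs' : s < b1 i),
      ii.map (b1 i) (extVec Aa N0 a0 b0 E0 (fun j => EXT j i) (b1 i)) =
        Vv.ρ s (b1 i) (le_of_lt hs') (lift i s hs hs'))
    (s t : ℝ) (h : s ≤ t) (x : ExtTarget Aa N1 a1 s) :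
    Vv.ρ s t h (Phi Aa Vv ii N0 a0 b0 E0 N1 a1 b1 lift EXT s x) =
    Phi Aa Vv ii N0 a0 b0 E0 N1 a1 b1 lift EXT t (extMap Aa N1 a1 s t h x) := by
  simp only [Phi, extMap, resMap, LinearMap.coe_mk, AddHom.coe_mk, LinearMap.prodMap_apply,
    map_add, map_sum]
  congr 1
  · exact (ii.comm s t h x.1).symm
  · refine Finset.sum_congr rfl (fun i _ => ?_)
    by_cases hs' : a1 i ≤ s
    · have ht' : a1 i ≤ t := hs'.trans h
      rw [dif_pos hs', dif_pos ht', dif_pos hs', map_smul,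
        rho_liftExt Aa Vv ii N0 a0 b0 E0 N1 a1 b1 lift EXT hliftcompat hEXT i s t hs' h]
    · by_cases ht' : a1 i ≤ t
      · rw [dif_neg hs', dif_pos ht', dif_neg hs', map_zero, zero_smul]
      · rw [dif_neg hs', dif_neg ht', map_zero]

end Aux2

section Aux3

variable (Aa Vv Bb : PersMod) (ii : PersHom Aa Vv) (pp : PersHom Vv Bb)
  (N0 : ℕ) (a0 b0 : Fin N0 → ℝ) (E0 : BarcodeBasis Aa N0 a0 b0)
  (N1 : ℕ) (a1 b1 : Fin N1 → ℝ) (E1 : BarcodeBasis Bb N1 a1 b1)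
  (lift : ∀ (i : Fin N1) (t : ℝ), a1 i ≤ t → t < b1 i → Vv.V t)
  (EXT : Fin N0 → Fin N1 → ZMod 2)

lemma pp_ii_eq_zero (hexact : ∀ t : ℝ, LinearMap.range (ii.map t) = LinearMap.ker (pp.map t))
    (t : ℝ) (a : Aa.V t) : pp.map t (ii.map t a) = 0 := by
  have : ii.map t a ∈ LinearMap.ker (pp.map t) := by
    rw [← hexact t]; exact LinearMap.mem_range_self _ a
  exact this

lemma pp_liftExt
    (hexact : ∀ t : ℝ, LinearMap.range (ii.map t) = LinearMap.ker (pp.map t))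
    (hlift : ∀ (i : Fin N1) (t : ℝ) (h1 : a1 i ≤ t) (h2 : t < b1 i),
      pp.map t (lift i t h1 h2) = E1.vec i t h1 h2)
    (i : Fin N1) (t : ℝ) (h : a1 i ≤ t) :
    pp.map t (liftExt Aa Vv ii N0 a0 b0 E0 N1 a1 b1 lift EXT i t h) =
    if h2 : t < b1 i then E1.vec i t h h2 else 0 := by
  unfold liftExt
  by_cases h2 : t < b1 i
  · rw [dif_pos h2, dif_pos h2, hlift]
  · rw [dif_neg h2, dif_neg h2, pp.comm,
      pp_ii_eq_zero Aa Vv Bb ii pp hexact, map_zero]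

lemma Phi_surj
    (hexact : ∀ t : ℝ, LinearMap.range (ii.map t) = LinearMap.ker (pp.map t))
    (hlift : ∀ (i : Fin N1) (t : ℝ) (h1 : a1 i ≤ t) (h2 : t < b1 i),
      pp.map t (lift i t h1 h2) = E1.vec i t h1 h2)
    (t : ℝ) : Function.Surjective (Phi Aa Vv ii N0 a0 b0 E0 N1 a1 b1 lift EXT t) := by
  intro v
  have hmem : pp.map t v ∈ Submodule.span (ZMod 2)
      (Set.range (fun i : {i : Fin N1 // a1 i ≤ t ∧ t < b1 i} => E1.vec i.1 t i.2.1 i.2.2)) := by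
    rw [E1.spans t]; trivial
  obtain ⟨c, hc⟩ := (Submodule.mem_span_range_iff_exists_fun (ZMod 2)).1 hmem
  set f : {i : Fin N1 // a1 i ≤ t} → ZMod 2 :=
    fun k => if h2 : t < b1 k.1 then c ⟨k.1, k.2, h2⟩ else 0 with hf
  set w : Vv.V t := ∑ i : Fin N1,
    if h : a1 i ≤ t then f ⟨i, h⟩ • liftExt Aa Vv ii N0 a0 b0 E0 N1 a1 b1 lift EXT i t h
    else 0 with hw
  have hpw : pp.map t w = pp.map t v := by
    rw [hw, map_sum]
    have : ∀ i : Fin N1,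
        pp.map t (if h : a1 i ≤ t then
          f ⟨i, h⟩ • liftExt Aa Vv ii N0 a0 b0 E0 N1 a1 b1 lift EXT i t h else 0) =
        (if h : a1 i ≤ t ∧ t < b1 i then c ⟨i, h⟩ • E1.vec i t h.1 h.2 else 0) := by
      intro i
      by_cases h1 : a1 i ≤ t
      · rw [dif_pos h1, map_smul,
          pp_liftExt Aa Vv Bb ii pp N0 a0 b0 E0 N1 a1 b1 E1 lift EXT hexact hlift i t h1]
        by_cases h2 : t < b1 i
        · rw [dif_pos h2, dif_pos (⟨h1, h2⟩ : a1 i ≤ t ∧ t < b1 i), hf]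
          simp only [dif_pos h2]
        · rw [dif_neg h2, dif_neg (fun hh : a1 i ≤ t ∧ t < b1 i => h2 hh.2), hf]
          simp only [dif_neg h2, zero_smul, smul_zero]
      · rw [dif_neg h1, dif_neg (fun hh : a1 i ≤ t ∧ t < b1 i => h1 hh.1), map_zero]
    rw [Finset.sum_congr rfl (fun i _ => this i),
      ← sum_dite_subtype (fun i : Fin N1 => a1 i ≤ t ∧ t < b1 i)
        (fun i h => c ⟨i, h⟩ • E1.vec i t h.1 h.2), hc]
  have hker : v - w ∈ LinearMap.ker (pp.map t) := by
    rw [LinearMap.mem_ker, map_sub, hpw, sub_self]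
  rw [← hexact t] at hker
  obtain ⟨a, ha⟩ := hker
  refine ⟨(a, f), ?_⟩
  show ii.map t a + _ = v
  rw [← hw, ha]
  abel

end Aux3

section Aux4

variable (Aa Vv Bb : PersMod) (ii : PersHom Aa Vv) (pp : PersHom Vv Bb)
  (N0 : ℕ) (a0 b0 : Fin N0 → ℝ) (E0 : BarcodeBasis Aa N0 a0 b0)
  (N1 : ℕ) (a1 b1 : Fin N1 → ℝ) (E1 : BarcodeBasis Bb N1 a1 b1)
  (lift : ∀ (i : Fin N1) (t : ℝ), a1 i ≤ t → t < b1 i → Vv.V t)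
  (EXT : Fin N0 → Fin N1 → ZMod 2)

lemma extRel_le_ker (hne : ∀ i : Fin N1, a1 i < b1 i) (t : ℝ) :
    extRel Aa N0 a0 b0 E0 N1 a1 b1 EXT t ≤
      LinearMap.ker (Phi Aa Vv ii N0 a0 b0 E0 N1 a1 b1 lift EXT t) := by
  rw [extRel, Submodule.span_le]
  rintro x ⟨i, hi, rfl⟩
  simp only [SetLike.mem_coe, LinearMap.mem_ker]
  have ha : a1 i ≤ t := (hne i).le.trans hi
  show Phi Aa Vv ii N0 a0 b0 E0 N1 a1 b1 lift EXT t
    (extGen Aa N0 a0 b0 E0 N1 a1 b1 EXT i t hi) = 0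
  unfold Phi extGen
  simp only [LinearMap.coe_mk, AddHom.coe_mk]
  have hsum : (∑ k : Fin N1, if h : a1 k ≤ t then
        (if (⟨k, h⟩ : {j : Fin N1 // a1 j ≤ t}).1 = i then (1:ZMod 2) else 0) •
          liftExt Aa Vv ii N0 a0 b0 E0 N1 a1 b1 lift EXT k t h else 0)
      = liftExt Aa Vv ii N0 a0 b0 E0 N1 a1 b1 lift EXT i t ha := by
    rw [Finset.sum_eq_single i]
    · rw [dif_pos ha, if_pos rfl, one_smul]
    · intro k _ hk
      by_cases h : a1 k ≤ t
      · rw [dif_pos h, if_neg hk, zero_smul]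
      · rw [dif_neg h]
    · intro hmem; exact absurd (Finset.mem_univ i) hmem
  rw [hsum]
  unfold liftExt
  rw [dif_neg (not_lt.2 hi), ← ii.comm]
  exact zmod2_add_self _

lemma ker_le_extRel
    (hinj : ∀ t : ℝ, Function.Injective (ii.map t))
    (hexact : ∀ t : ℝ, LinearMap.range (ii.map t) = LinearMap.ker (pp.map t))
    (hlift : ∀ (i : Fin N1) (t : ℝ) (h1 : a1 i ≤ t) (h2 : t < b1 i),
      pp.map t (lift i t h1 h2) = E1.vec i t h1 h2)
    (hne : ∀ i : Fin N1, a1 i < b1 i) (t : ℝ) :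
    LinearMap.ker (Phi Aa Vv ii N0 a0 b0 E0 N1 a1 b1 lift EXT t) ≤
      extRel Aa N0 a0 b0 E0 N1 a1 b1 EXT t := by
  intro x hx
  rw [LinearMap.mem_ker] at hx
  set S : ExtTarget Aa N1 a1 t := ∑ i : Fin N1,
    if hbi : b1 i ≤ t then x.2 ⟨i, (hne i).le.trans hbi⟩ •
      extGen Aa N0 a0 b0 E0 N1 a1 b1 EXT i t hbi else 0 with hS
  have hSmem : S ∈ extRel Aa N0 a0 b0 E0 N1 a1 b1 EXT t := by
    apply Submodule.sum_mem
    intro i _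
    by_cases hbi : b1 i ≤ t
    · rw [dif_pos hbi]
      exact Submodule.smul_mem _ _ (Submodule.subset_span ⟨i, hbi, rfl⟩)
    · rw [dif_neg hbi]; exact Submodule.zero_mem _
  set z : ExtTarget Aa N1 a1 t := x - S with hzdef
  have hS2 : ∀ k : {j : Fin N1 // a1 j ≤ t}, S.2 k = if b1 k.1 ≤ t then x.2 k else 0 := by
    intro k
    have h1 : S.2 k = ∑ i : Fin N1,
        (if hbi : b1 i ≤ t then x.2 ⟨i, (hne i).le.trans hbi⟩ •
          extGen Aa N0 a0 b0 E0 N1 a1 b1 EXT i t hbi else 0).2 k := by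
      rw [hS, Prod.snd_sum, Finset.sum_apply]
    rw [h1, Finset.sum_eq_single k.1]
    · by_cases hbk : b1 k.1 ≤ t
      · rw [dif_pos hbk, if_pos hbk]
        show x.2 ⟨k.1, _⟩ • (if k.1 = k.1 then (1:ZMod 2) else 0) = x.2 k
        rw [if_pos rfl, smul_eq_mul, mul_one]
      · rw [dif_neg hbk, if_neg hbk]; rfl
    · intro i _ hik
      by_cases hbi : b1 i ≤ t
      · rw [dif_pos hbi]
        show x.2 ⟨i, _⟩ • (if k.1 = i then (1:ZMod 2) else 0) = 0
        rw [if_neg (fun h => hik h.symm), smul_zero]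
      · rw [dif_neg hbi]; rfl
    · intro hmem; exact absurd (Finset.mem_univ k.1) hmem
  have hz2 : ∀ k : {j : Fin N1 // a1 j ≤ t}, z.2 k = if b1 k.1 ≤ t then 0 else x.2 k := by
    intro k
    have : z.2 k = x.2 k - S.2 k := rfl
    rw [this, hS2 k]
    split_ifs with hbk
    · exact sub_self _
    · exact sub_zero _
  have hPhiz : Phi Aa Vv ii N0 a0 b0 E0 N1 a1 b1 lift EXT t z = 0 := by
    have hPS : Phi Aa Vv ii N0 a0 b0 E0 N1 a1 b1 lift EXT t S = 0 :=
      LinearMap.mem_ker.1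
        (extRel_le_ker Aa Vv ii N0 a0 b0 E0 N1 a1 b1 lift EXT hne t hSmem)
    rw [hzdef, map_sub, hx, hPS, sub_zero]
  -- apply pp to Phi z = 0
  have hsumB : (∑ i : Fin N1, if h : a1 i ≤ t ∧ t < b1 i then
      z.2 ⟨i, h.1⟩ • E1.vec i t h.1 h.2 else 0) = 0 := by
    have expand : pp.map t (Phi Aa Vv ii N0 a0 b0 E0 N1 a1 b1 lift EXT t z) =
        ∑ i : Fin N1, if h : a1 i ≤ t ∧ t < b1 i then
          z.2 ⟨i, h.1⟩ • E1.vec i t h.1 h.2 else 0 := by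
      unfold Phi
      simp only [LinearMap.coe_mk, AddHom.coe_mk, map_add, map_sum]
      rw [pp_ii_eq_zero Aa Vv Bb ii pp hexact, zero_add]
      refine Finset.sum_congr rfl (fun i _ => ?_)
      by_cases h1 : a1 i ≤ t
      · rw [dif_pos h1, map_smul,
          pp_liftExt Aa Vv Bb ii pp N0 a0 b0 E0 N1 a1 b1 E1 lift EXT hexact hlift i t h1]
        by_cases h2 : t < b1 i
        · rw [dif_pos h2, dif_pos (⟨h1, h2⟩ : a1 i ≤ t ∧ t < b1 i)]
        · rw [dif_neg h2, dif_neg (fun hh : a1 i ≤ t ∧ t < b1 i => h2 hh.2), smul_zero]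
      · rw [dif_neg h1, dif_neg (fun hh : a1 i ≤ t ∧ t < b1 i => h1 hh.1), map_zero]
    rw [← expand, hPhiz, map_zero]
  have hg : ∀ k : {i : Fin N1 // a1 i ≤ t ∧ t < b1 i}, z.2 ⟨k.1, k.2.1⟩ = 0 := by
    have := (Fintype.linearIndependent_iff.1 (E1.indep t))
      (fun k : {i : Fin N1 // a1 i ≤ t ∧ t < b1 i} => z.2 ⟨k.1, k.2.1⟩)
    apply this
    rw [sum_dite_subtype (fun i : Fin N1 => a1 i ≤ t ∧ t < b1 i)
      (fun i h => z.2 ⟨i, h.1⟩ • E1.vec i t h.1 h.2)]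
    exact hsumB
  have hz2zero : z.2 = 0 := by
    funext k
    show z.2 k = (0 : ZMod 2)
    by_cases h2 : t < b1 k.1
    · exact hg ⟨k.1, k.2, h2⟩
    · rw [hz2 k, if_pos (not_lt.1 h2)]
  have hz1zero : z.1 = 0 := by
    apply hinj t
    have : Phi Aa Vv ii N0 a0 b0 E0 N1 a1 b1 lift EXT t z = ii.map t z.1 := by
      unfold Phi
      simp only [LinearMap.coe_mk, AddHom.coe_mk]
      rw [Finset.sum_eq_zero, add_zero]
      intro i _
      by_cases h1 : a1 i ≤ t
      · rw [dif_pos h1, show z.2 ⟨i, h1⟩ = 0 from congrFun hz2zero _, zero_smul]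
      · rw [dif_neg h1]
    rw [← this, hPhiz, map_zero]
  have : x = S := by
    have hz0 : z = 0 := Prod.ext hz1zero hz2zero
    have := sub_eq_zero.1 (hzdef ▸ hz0)
    exact this
  rw [this]; exact hSmem

lemma extMap_extGen (hne : ∀ i : Fin N1, a1 i < b1 i)
    (s t : ℝ) (h : s ≤ t) (i : Fin N1) (hi : b1 i ≤ s) :
    extMap Aa N1 a1 s t h (extGen Aa N0 a0 b0 E0 N1 a1 b1 EXT i s hi) =
    extGen Aa N0 a0 b0 E0 N1 a1 b1 EXT i t (hi.trans h) := by
  unfold extMap extGen resMap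
  refine Prod.ext ?_ ?_
  · show Aa.ρ s t h (Aa.ρ (b1 i) s hi _) = _
    exact Aa.ρ_comp _ _ _ _ _ _
  · show (fun k : {j : Fin N1 // a1 j ≤ t} =>
      if h' : a1 k.1 ≤ s then (if k.1 = i then (1 : ZMod 2) else 0) else 0) = _
    funext k
    by_cases hk : k.1 = i
    · have : a1 k.1 ≤ s := by rw [hk]; exact (hne i).le.trans hi
      rw [dif_pos this]
    · by_cases h' : a1 k.1 ≤ s
      · rw [dif_pos h']
      · rw [dif_neg h']
        show (0 : ZMod 2) = if k.1 = i then 1 else 0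
        rw [if_neg hk]

end Aux4


/-- The extension problem: let `0 → A → V → B → 0` be a short exact sequence of tame
persistence modules over `ℤ/2` in which every interval of the barcode of `B` is finite
(all death values `b1 i` are real numbers).  Let `E0` be a barcode basis of `A` and
`E1 = {β_i ∼ [a1 i, b1 i)}` a barcode basis of `B`; choose compatible lifts of the `β_i`
to `V`, and let `EXT` be the extension matrix, whose `i`-th column records the coordinates
in `E0` of the image in `A` at parameter `b1 i` of the lift of `β_i`.  Then `V` is
isomorphic, as a persistence module, to the quotient `(A ⊕ B·E²) / ext(D·E²)`, where
`B·E²` (resp. `D·E²`) is the direct sum of the interval modules `[a1 i, ∞)` (resp.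
`[b1 i, ∞)`) and `ext` has block matrix `(EXT; Id)`. -/
theorem extension_problem_solution
    (Aa Vv Bb : PersMod)
    (ii : PersHom Aa Vv) (pp : PersHom Vv Bb)
    (hinj : ∀ t : ℝ, Function.Injective (ii.map t))
    (hsurj : ∀ t : ℝ, Function.Surjective (pp.map t))
    (hexact : ∀ t : ℝ, LinearMap.range (ii.map t) = LinearMap.ker (pp.map t))
    (N0 : ℕ) (a0 b0 : Fin N0 → ℝ) (E0 : BarcodeBasis Aa N0 a0 b0)
    (N1 : ℕ) (a1 b1 : Fin N1 → ℝ) (E1 : BarcodeBasis Bb N1 a1 b1)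
    (hne : ∀ i : Fin N1, a1 i < b1 i)
    (lift : ∀ (i : Fin N1) (t : ℝ), a1 i ≤ t → t < b1 i → Vv.V t)
    (hlift : ∀ (i : Fin N1) (t : ℝ) (h1 : a1 i ≤ t) (h2 : t < b1 i),
      pp.map t (lift i t h1 h2) = E1.vec i t h1 h2)
    (hliftcompat : ∀ (i : Fin N1) (s t : ℝ) (hs : a1 i ≤ s) (h : s ≤ t) (ht : t < b1 i),
      Vv.ρ s t h (lift i s hs (lt_of_le_of_lt h ht)) = lift i t (hs.trans h) ht)
    (EXT : Fin N0 → Fin N1 → ZMod 2)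
    (hEXT : ∀ (i : Fin N1) (s : ℝ) (hs : a1 i ≤ s) (hs' : s < b1 i),
      ii.map (b1 i) (extVec Aa N0 a0 b0 E0 (fun j => EXT j i) (b1 i)) =
        Vv.ρ s (b1 i) (le_of_lt hs') (lift i s hs hs')) :
    ∃ (eq : ∀ t : ℝ, Vv.V t ≃ₗ[ZMod 2]
        (ExtTarget Aa N1 a1 t ⧸ extRel Aa N0 a0 b0 E0 N1 a1 b1 EXT t))
      (hle : ∀ (s t : ℝ) (h : s ≤ t),
        extRel Aa N0 a0 b0 E0 N1 a1 b1 EXT s ≤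
          (extRel Aa N0 a0 b0 E0 N1 a1 b1 EXT t).comap (extMap Aa N1 a1 s t h)),
      ∀ (s t : ℝ) (h : s ≤ t) (x : Vv.V s),
        eq t (Vv.ρ s t h x) =
          Submodule.mapQ (extRel Aa N0 a0 b0 E0 N1 a1 b1 EXT s)
            (extRel Aa N0 a0 b0 E0 N1 a1 b1 EXT t)
            (extMap Aa N1 a1 s t h) (hle s t h) (eq s x) := by
  classical
  have hker : ∀ t : ℝ,
      LinearMap.ker (Phi Aa Vv ii N0 a0 b0 E0 N1 a1 b1 lift EXT t) =
        extRel Aa N0 a0 b0 E0 N1 a1 b1 EXT t := fun t =>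
    le_antisymm
      (ker_le_extRel Aa Vv Bb ii pp N0 a0 b0 E0 N1 a1 b1 E1 lift EXT hinj hexact hlift hne t)
      (extRel_le_ker Aa Vv ii N0 a0 b0 E0 N1 a1 b1 lift EXT hne t)
  have hle1 : ∀ t : ℝ, extRel Aa N0 a0 b0 E0 N1 a1 b1 EXT t ≤
      LinearMap.ker (Phi Aa Vv ii N0 a0 b0 E0 N1 a1 b1 lift EXT t) := fun t => (hker t).ge
  let q : ∀ t : ℝ, (ExtTarget Aa N1 a1 t ⧸ extRel Aa N0 a0 b0 E0 N1 a1 b1 EXT t)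
      →ₗ[ZMod 2] Vv.V t := fun t =>
    (extRel Aa N0 a0 b0 E0 N1 a1 b1 EXT t).liftQ
      (Phi Aa Vv ii N0 a0 b0 E0 N1 a1 b1 lift EXT t) (hle1 t)
  have hq_mk : ∀ (t : ℝ) (y : ExtTarget Aa N1 a1 t),
      q t (Submodule.Quotient.mk y) = Phi Aa Vv ii N0 a0 b0 E0 N1 a1 b1 lift EXT t y :=
    fun t y => Submodule.liftQ_apply _ _ y
  have hqinj : ∀ t : ℝ, Function.Injective (q t) := fun t =>
    LinearMap.ker_eq_bot.1 (Submodule.ker_liftQ_eq_bot _ _ _ (hker t).le)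
  have hqsurj : ∀ t : ℝ, Function.Surjective (q t) := by
    intro t v
    obtain ⟨y, hy⟩ := Phi_surj Aa Vv Bb ii pp N0 a0 b0 E0 N1 a1 b1 E1 lift EXT hexact hlift t v
    exact ⟨Submodule.Quotient.mk y, by rw [hq_mk]; exact hy⟩
  let eqv : ∀ t : ℝ, (ExtTarget Aa N1 a1 t ⧸ extRel Aa N0 a0 b0 E0 N1 a1 b1 EXT t)
      ≃ₗ[ZMod 2] Vv.V t := fun t => LinearEquiv.ofBijective (q t) ⟨hqinj t, hqsurj t⟩
  have hle : ∀ (s t : ℝ) (h : s ≤ t),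
      extRel Aa N0 a0 b0 E0 N1 a1 b1 EXT s ≤
        (extRel Aa N0 a0 b0 E0 N1 a1 b1 EXT t).comap (extMap Aa N1 a1 s t h) := by
    intro s t h
    rw [extRel, Submodule.span_le]
    rintro x ⟨i, hi, rfl⟩
    simp only [SetLike.mem_coe, Submodule.mem_comap]
    rw [extMap_extGen Aa N0 a0 b0 E0 N1 a1 b1 EXT hne s t h i hi]
    exact Submodule.subset_span ⟨i, hi.trans h, rfl⟩
  refine ⟨fun t => (eqv t).symm, hle, ?_⟩
  intro s t h x
  have key : ∀ qq : (ExtTarget Aa N1 a1 s ⧸ extRel Aa N0 a0 b0 E0 N1 a1 b1 EXT s),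
      Vv.ρ s t h (eqv s qq) =
        eqv t (Submodule.mapQ _ _ (extMap Aa N1 a1 s t h) (hle s t h) qq) := by
    intro qq
    obtain ⟨y, rfl⟩ := Submodule.Quotient.mk_surjective _ qq
    rw [Submodule.mapQ_apply]
    show Vv.ρ s t h (q s (Submodule.Quotient.mk y)) =
      q t (Submodule.Quotient.mk (extMap Aa N1 a1 s t h y))
    rw [hq_mk, hq_mk]
    exact Phi_comm Aa Vv ii N0 a0 b0 E0 N1 a1 b1 lift EXT hliftcompat hEXT s t h y
  have h1 : Vv.ρ s t h x =
      eqv t (Submodule.mapQ _ _ (extMap Aa N1 a1 s t h) (hle s t h) ((eqv s).symm x)) := by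
    have := key ((eqv s).symm x)
    rwa [LinearEquiv.apply_symm_apply] at this
  rw [h1, LinearEquiv.symm_apply_apply]
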